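/- The number of equivalence classes of 𝕋 under the equivalence relation ω ~ ω′ iff ω′ = ω P for some r×r permutation matrix P equals the sum, over all triples of natural numbers (k, s, t) with k + s + t = r, k + s ≤ p and k + t ≤ q, of [p! / (k! · s! · (p−k−s)!)] · [q! / (k! · t! · (q−k−t)!)] · k!. -/

import Mathlib

open scoped Classical
open Matrix

noncomputable section

/-- A partial permutation matrix: entries in `{0,1}`, at most one `1` in each row
and in each column. -/
def IsPartialPerm {m n : ℕ} (τ : Matrix (Fin m) (Fin n) ℂ) : Prop :=
  (∀ i j, τ i j = 0 ∨ τ i j = 1) ∧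
  (∀ i j j', τ i j = 1 → τ i j' = 1 → j = j') ∧
  (∀ i i' j, τ i j = 1 → τ i' j = 1 → i = i')

/-- `(p+q) × r` complex matrices, rows indexed by `Fin p ⊕ Fin q`. -/
abbrev MatT (p q r : ℕ) := Matrix (Fin p ⊕ Fin q) (Fin r) ℂ

/-- The set `𝕋`: `(p+q) × r` matrices of rank `r` whose top `p × r` and bottom
`q × r` blocks are partial permutation matrices. -/
def InT {p q r : ℕ} (ω : MatT p q r) : Prop :=
  ω.rank = r ∧
  IsPartialPerm (Matrix.of fun (i : Fin p) (c : Fin r) => ω (Sum.inl i) c) ∧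
  IsPartialPerm (Matrix.of fun (j : Fin q) (c : Fin r) => ω (Sum.inr j) c)

/-- The permutation matrix of `w`: `(P_w)_{i,j} = 1` iff `i = w j`. -/
def permMat {r : ℕ} (w : Equiv.Perm (Fin r)) : Matrix (Fin r) (Fin r) ℂ :=
  Matrix.of fun i j => if i = w j then 1 else 0

/-- `[ω]`, the column space of `ω`, as a subspace of `ℂ^{p+q}`. -/
def colSpace {p q r : ℕ} (ω : MatT p q r) : Submodule ℂ (Fin p ⊕ Fin q → ℂ) :=
  LinearMap.range ω.mulVecLin

-- ### column types
abbrev CC (p q : ℕ) := Fin p ⊕ Fin q ⊕ Fin p × Fin q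

def topRow {p q : ℕ} : CC p q → Option (Fin p)
  | .inl i => some i
  | .inr (.inl _) => none
  | .inr (.inr x) => some x.1

def botRow {p q : ℕ} : CC p q → Option (Fin q)
  | .inl _ => none
  | .inr (.inl j) => some j
  | .inr (.inr x) => some x.2

lemma CC_ext {p q : ℕ} {c c' : CC p q} (h1 : topRow c = topRow c')
    (h2 : botRow c = botRow c') : c = c' := by
  rcases c with i | j | x <;> rcases c' with i' | j' | x' <;>
    simp_all [topRow, botRow, Prod.ext_iff]

def Good {p q r : ℕ} (f : Fin r → CC p q) : Prop :=
  (∀ a b i, topRow (f a) = some i → topRow (f b) = some i → a = b) ∧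
  (∀ a b j, botRow (f a) = some j → botRow (f b) = some j → a = b)

lemma top_or_bot {p q : ℕ} (c : CC p q) :
    (∃ i, topRow c = some i) ∨ (∃ j, botRow c = some j) := by
  rcases c with i | j | x <;> simp [topRow, botRow]

lemma Good.injective {p q r : ℕ} {f : Fin r → CC p q} (hf : Good f) :
    Function.Injective f := by
  intro a b hab
  rcases top_or_bot (f a) with ⟨i, hi⟩ | ⟨j, hj⟩
  · exact hf.1 a b i hi (hab ▸ hi)
  · exact hf.2 a b j hj (hab ▸ hj)

-- ### from functions to matrices
def ofFunM {p q r : ℕ} (f : Fin r → CC p q) : MatT p q r :=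
  Matrix.of fun row c =>
    Sum.elim (fun i => if topRow (f c) = some i then (1 : ℂ) else 0)
      (fun j => if botRow (f c) = some j then (1 : ℂ) else 0) row

lemma ofFunM_inl {p q r : ℕ} (f : Fin r → CC p q) (i : Fin p) (c : Fin r) :
    ofFunM f (Sum.inl i) c = if topRow (f c) = some i then 1 else 0 := rfl

lemma ofFunM_inr {p q r : ℕ} (f : Fin r → CC p q) (j : Fin q) (c : Fin r) :
    ofFunM f (Sum.inr j) c = if botRow (f c) = some j then 1 else 0 := rfl

lemma rank_ofFunM {p q r : ℕ} {f : Fin r → CC p q} (hf : Good f) :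
    (ofFunM f).rank = r := by
  have hli : LinearIndependent ℂ (ofFunM f)ᵀ := by
    refine Fintype.linearIndependent_iff.mpr ?_
    intro g hg c
    have key : ∀ ρ : Fin p ⊕ Fin q, ofFunM f ρ c = 1 →
        (∀ b : Fin r, b ≠ c → ofFunM f ρ b = 0) → g c = 0 := by
      intro ρ hρ hzero
      have h2 := congrFun hg ρ
      simp only [Finset.sum_apply, Pi.smul_apply, Matrix.transpose_apply,
        smul_eq_mul, Pi.zero_apply] at h2
      rw [Finset.sum_eq_single c (fun b _ hb => by rw [hzero b hb, mul_zero])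
        (fun hc => absurd (Finset.mem_univ c) hc)] at h2
      rwa [hρ, mul_one] at h2
    rcases top_or_bot (f c) with ⟨i, hi⟩ | ⟨j, hj⟩
    · refine key (Sum.inl i) (by rw [ofFunM_inl, if_pos hi]) ?_
      intro b hb
      rw [ofFunM_inl, if_neg]
      intro h; exact hb (hf.1 b c i h hi)
    · refine key (Sum.inr j) (by rw [ofFunM_inr, if_pos hj]) ?_
      intro b hb
      rw [ofFunM_inr, if_neg]
      intro h; exact hb (hf.2 b c j h hj)
  rw [Matrix.rank_eq_finrank_span_cols, show (ofFunM f).col = (ofFunM f)ᵀ from rfl,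
    finrank_span_eq_card hli, Fintype.card_fin]

lemma InT_ofFunM {p q r : ℕ} {f : Fin r → CC p q} (hf : Good f) :
    InT (ofFunM f) := by
  refine ⟨rank_ofFunM hf, ⟨?_, ?_, ?_⟩, ⟨?_, ?_, ?_⟩⟩
  · intro i c
    rw [Matrix.of_apply, ofFunM_inl]; split <;> simp
  · intro i c c' h h'
    rw [Matrix.of_apply, ofFunM_inl] at h h'
    split_ifs at h h' with h1 h2 <;> try simp_all
    exact hf.1 c c' i h1 h2
  · intro i i' c h h'
    rw [Matrix.of_apply, ofFunM_inl] at h h'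
    split_ifs at h h' with h1 h2 <;> try simp_all
  · intro j c
    rw [Matrix.of_apply, ofFunM_inr]; split <;> simp
  · intro j c c' h h'
    rw [Matrix.of_apply, ofFunM_inr] at h h'
    split_ifs at h h' with h1 h2 <;> try simp_all
    exact hf.2 c c' j h1 h2
  · intro j j' c h h'
    rw [Matrix.of_apply, ofFunM_inr] at h h'
    split_ifs at h h' with h1 h2 <;> try simp_all

-- ### from matrices to functions
lemma InT.entry01 {p q r : ℕ} {ω : MatT p q r} (hω : InT ω) (row : Fin p ⊕ Fin q)
    (c : Fin r) : ω row c = 0 ∨ ω row c = 1 := by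
  rcases row with i | j
  · exact hω.2.1.1 i c
  · exact hω.2.2.1 j c

lemma InT.col_ne {p q r : ℕ} {ω : MatT p q r} (hω : InT ω) (c : Fin r) :
    (∃ i, ω (Sum.inl i) c = 1) ∨ (∃ j, ω (Sum.inr j) c = 1) := by
  by_contra hcon
  push_neg at hcon
  have hzero : ∀ row, ω row c = 0 := by
    intro row
    rcases hω.entry01 row c with h | h
    · exact h
    · rcases row with i | j
      · exact absurd h (hcon.1 i)
      · exact absurd h (hcon.2 j)
  have hker : ω.mulVecLin ((Pi.single c 1 : Fin r → ℂ)) = 0 := by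
    rw [Matrix.mulVecLin_apply, Matrix.mulVec_single]
    funext row
    show MulOpposite.op (1 : ℂ) • ω row c = 0
    rw [hzero row, smul_zero]
  have hkerbot : LinearMap.ker ω.mulVecLin = ⊥ := by
    have h1 := LinearMap.finrank_range_add_finrank_ker ω.mulVecLin
    have h2 : Module.finrank ℂ (Fin r → ℂ) = r := by
      rw [Module.finrank_pi, Fintype.card_fin]
    rw [h2] at h1
    have h3 : ω.rank = r := hω.1
    rw [Matrix.rank] at h3
    rw [h3] at h1
    have h4 : Module.finrank ℂ (LinearMap.ker ω.mulVecLin) = 0 := by omega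
    exact Submodule.finrank_eq_zero.mp h4
  have : (Pi.single c 1 : Fin r → ℂ) = 0 := by
    have := LinearMap.ker_eq_bot.mp hkerbot
    exact this (by rw [hker, map_zero])
  have := congrFun this c
  simp at this

def topIdx {p q r : ℕ} (ω : MatT p q r) (c : Fin r) : Option (Fin p) :=
  if h : ∃ i, ω (Sum.inl i) c = 1 then some h.choose else none

def botIdx {p q r : ℕ} (ω : MatT p q r) (c : Fin r) : Option (Fin q) :=
  if h : ∃ j, ω (Sum.inr j) c = 1 then some h.choose else none

lemma topIdx_eq_some {p q r : ℕ} {ω : MatT p q r} (hω : InT ω) {c : Fin r} {i : Fin p} :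
    topIdx ω c = some i ↔ ω (Sum.inl i) c = 1 := by
  rw [topIdx]
  constructor
  · intro h
    split_ifs at h with h1
    cases h; exact h1.choose_spec
  · intro h
    rw [dif_pos ⟨i, h⟩]
    have := (⟨i, h⟩ : ∃ i, ω (Sum.inl i) c = 1).choose_spec
    exact congrArg some (hω.2.1.2.2 _ i c this h)

lemma botIdx_eq_some {p q r : ℕ} {ω : MatT p q r} (hω : InT ω) {c : Fin r} {j : Fin q} :
    botIdx ω c = some j ↔ ω (Sum.inr j) c = 1 := by
  rw [botIdx]
  constructor
  · intro h
    split_ifs at h with h1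
    cases h; exact h1.choose_spec
  · intro h
    rw [dif_pos ⟨j, h⟩]
    have := (⟨j, h⟩ : ∃ j, ω (Sum.inr j) c = 1).choose_spec
    exact congrArg some (hω.2.2.2.2 _ j c this h)

lemma topIdx_eq_none {p q r : ℕ} {ω : MatT p q r} {c : Fin r} :
    topIdx ω c = none ↔ ¬∃ i, ω (Sum.inl i) c = 1 := by
  rw [topIdx]; split_ifs with h <;> simp [h]

lemma botIdx_eq_none {p q r : ℕ} {ω : MatT p q r} {c : Fin r} :
    botIdx ω c = none ↔ ¬∃ j, ω (Sum.inr j) c = 1 := by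
  rw [botIdx]; split_ifs with h <;> simp [h]

def toFunM {p q r : ℕ} (ω : MatT p q r)
    (hcol : ∀ c, (∃ i, ω (Sum.inl i) c = 1) ∨ (∃ j, ω (Sum.inr j) c = 1))
    (c : Fin r) : CC p q :=
  if h1 : ∃ i, ω (Sum.inl i) c = 1 then
    if h2 : ∃ j, ω (Sum.inr j) c = 1 then .inr (.inr (h1.choose, h2.choose))
    else .inl h1.choose
  else if h2 : ∃ j, ω (Sum.inr j) c = 1 then .inr (.inl h2.choose)
  else absurd ((hcol c).resolve_left h1) h2

lemma topRow_toFunM {p q r : ℕ} (ω : MatT p q r) (hcol) (c : Fin r) :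
    topRow (toFunM ω hcol c) = topIdx ω c := by
  rw [toFunM, topIdx]
  split_ifs with h1 h2 h2 <;> first | rfl | exact absurd ((hcol c).resolve_left h1) h2

lemma botRow_toFunM {p q r : ℕ} (ω : MatT p q r) (hcol) (c : Fin r) :
    botRow (toFunM ω hcol c) = botIdx ω c := by
  rw [toFunM, botIdx]
  split_ifs with h1 h2 h2 <;> first | rfl | exact absurd ((hcol c).resolve_left h1) h2

lemma Good_toFunM {p q r : ℕ} {ω : MatT p q r} (hω : InT ω) (hcol) :
    Good (toFunM ω hcol) := by
  constructor
  · intro a b i ha hb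
    rw [topRow_toFunM, topIdx_eq_some hω] at ha hb
    exact hω.2.1.2.1 i a b ha hb
  · intro a b j ha hb
    rw [botRow_toFunM, botIdx_eq_some hω] at ha hb
    exact hω.2.2.2.1 j a b ha hb

lemma ofFunM_toFunM {p q r : ℕ} {ω : MatT p q r} (hω : InT ω) (hcol) :
    ofFunM (toFunM ω hcol) = ω := by
  funext row c
  rcases row with i | j
  · rw [ofFunM_inl, topRow_toFunM]
    rcases hω.entry01 (Sum.inl i) c with h | h
    · rw [h, if_neg]
      intro hc; rw [topIdx_eq_some hω] at hc
      rw [hc] at h; exact one_ne_zero h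
    · rw [h, if_pos ((topIdx_eq_some hω).mpr h)]
  · rw [ofFunM_inr, botRow_toFunM]
    rcases hω.entry01 (Sum.inr j) c with h | h
    · rw [h, if_neg]
      intro hc; rw [botIdx_eq_some hω] at hc
      rw [hc] at h; exact one_ne_zero h
    · rw [h, if_pos ((botIdx_eq_some hω).mpr h)]

lemma topIdx_ofFunM {p q r : ℕ} {f : Fin r → CC p q} (hf : Good f) (c : Fin r) :
    topIdx (ofFunM f) c = topRow (f c) := by
  rcases h : topRow (f c) with _ | i
  · rw [topIdx_eq_none]
    rintro ⟨i, hi⟩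
    rw [ofFunM_inl, h] at hi
    simp at hi
  · rw [topIdx_eq_some (InT_ofFunM hf), ofFunM_inl, if_pos h]

lemma botIdx_ofFunM {p q r : ℕ} {f : Fin r → CC p q} (hf : Good f) (c : Fin r) :
    botIdx (ofFunM f) c = botRow (f c) := by
  rcases h : botRow (f c) with _ | j
  · rw [botIdx_eq_none]
    rintro ⟨j, hj⟩
    rw [ofFunM_inr, h] at hj
    simp at hj
  · rw [botIdx_eq_some (InT_ofFunM hf), ofFunM_inr, if_pos h]

lemma toFunM_ofFunM {p q r : ℕ} {f : Fin r → CC p q} (hf : Good f) (hcol) :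
    toFunM (ofFunM f) hcol = f := by
  funext c
  refine CC_ext ?_ ?_
  · rw [topRow_toFunM, topIdx_ofFunM hf]
  · rw [botRow_toFunM, botIdx_ofFunM hf]

-- ### quotient vs finsets
def GoodS {p q : ℕ} (S : Finset (CC p q)) : Prop :=
  (∀ c ∈ S, ∀ c' ∈ S, ∀ i, topRow c = some i → topRow c' = some i → c = c') ∧
  (∀ c ∈ S, ∀ c' ∈ S, ∀ j, botRow c = some j → botRow c' = some j → c = c')

lemma mul_permMat {p q r : ℕ} (ω : MatT p q r) (w : Equiv.Perm (Fin r))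
    (row : Fin p ⊕ Fin q) (c : Fin r) :
    (ω * permMat w) row c = ω row (w c) := by
  rw [Matrix.mul_apply]
  rw [Finset.sum_eq_single (w c) (fun b _ hb => by
    rw [permMat, Matrix.of_apply, if_neg (by simpa using hb), mul_zero])
    (fun hc => absurd (Finset.mem_univ _) hc)]
  rw [permMat, Matrix.of_apply, if_pos rfl, mul_one]

lemma toFunM_mul_perm {p q r : ℕ} {ω ω' : MatT p q r} (hω : InT ω) (hω' : InT ω')
    {w : Equiv.Perm (Fin r)} (h : ω' = ω * permMat w) (hcol hcol') (c : Fin r) :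
    toFunM ω' hcol' c = toFunM ω hcol (w c) := by
  refine CC_ext ?_ ?_
  · rw [topRow_toFunM, topRow_toFunM]
    rcases ht : topIdx ω (w c) with _ | i
    · rw [topIdx_eq_none] at ht ⊢
      rintro ⟨i, hi⟩
      rw [h, mul_permMat] at hi
      exact ht ⟨i, hi⟩
    · rw [topIdx_eq_some hω'] at *
      rw [topIdx_eq_some hω] at ht
      rw [h, mul_permMat]
      exact ht
  · rw [botRow_toFunM, botRow_toFunM]
    rcases ht : botIdx ω (w c) with _ | j
    · rw [botIdx_eq_none] at ht ⊢
      rintro ⟨j, hj⟩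
      rw [h, mul_permMat] at hj
      exact ht ⟨j, hj⟩
    · rw [botIdx_eq_some hω'] at *
      rw [botIdx_eq_some hω] at ht
      rw [h, mul_permMat]
      exact ht

lemma images_perm {p q r : ℕ} {f f' : Fin r → CC p q} (hf : Function.Injective f)
    (hf' : Function.Injective f')
    (h : Finset.image f Finset.univ = Finset.image f' Finset.univ) :
    ∃ w : Equiv.Perm (Fin r), f' = f ∘ w := by
  have hrange : Set.range f' = Set.range f := by
    rw [← Set.image_univ, ← Set.image_univ, ← Finset.coe_univ, ← Finset.coe_image,
      ← Finset.coe_image, h]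
  refine ⟨(Equiv.ofInjective f' hf').trans ((Equiv.setCongr hrange).trans
    (Equiv.ofInjective f hf).symm), ?_⟩
  funext c
  simp only [Function.comp_apply, Equiv.trans_apply, Equiv.setCongr_apply]
  rw [Equiv.apply_ofInjective_symm hf]
  simp [Equiv.ofInjective_apply]

lemma GoodS_image {p q r : ℕ} {f : Fin r → CC p q} (hf : Good f) :
    GoodS (Finset.image f Finset.univ) := by
  constructor
  · intro c hc c' hc' i h h'
    obtain ⟨a, _, rfl⟩ := Finset.mem_image.mp hc
    obtain ⟨b, _, rfl⟩ := Finset.mem_image.mp hc'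
    exact congrArg f (hf.1 a b i h h')
  · intro c hc c' hc' j h h'
    obtain ⟨a, _, rfl⟩ := Finset.mem_image.mp hc
    obtain ⟨b, _, rfl⟩ := Finset.mem_image.mp hc'
    exact congrArg f (hf.2 a b j h h')

lemma card_image_good {p q r : ℕ} {f : Fin r → CC p q} (hf : Good f) :
    (Finset.image f Finset.univ).card = r := by
  rw [Finset.card_image_of_injective _ hf.injective, Finset.card_univ, Fintype.card_fin]

def classSet {p q r : ℕ} (ω : {ω : MatT p q r // InT ω}) :
    {S : Finset (CC p q) // GoodS S ∧ S.card = r} :=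
  ⟨Finset.image (toFunM ω.1 ω.2.col_ne) Finset.univ,
    GoodS_image (Good_toFunM ω.2 _), card_image_good (Good_toFunM ω.2 _)⟩

lemma classSet_resp {p q r : ℕ} (ω ω' : {ω : MatT p q r // InT ω})
    (h : ∃ w : Equiv.Perm (Fin r), ω'.1 = ω.1 * permMat w) :
    classSet ω = classSet ω' := by
  obtain ⟨w, hw⟩ := h
  refine Subtype.ext ?_
  show Finset.image (toFunM ω.1 ω.2.col_ne) Finset.univ
      = Finset.image (toFunM ω'.1 ω'.2.col_ne) Finset.univ
  have hptw : ∀ c, toFunM ω'.1 ω'.2.col_ne c = toFunM ω.1 ω.2.col_ne (w c) :=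
    toFunM_mul_perm ω.2 ω'.2 hw _ _
  refine Finset.ext fun c => ?_
  simp only [Finset.mem_image, Finset.mem_univ, true_and]
  constructor
  · rintro ⟨a, rfl⟩
    exact ⟨w.symm a, by rw [hptw, Equiv.apply_symm_apply]⟩
  · rintro ⟨a, rfl⟩
    exact ⟨w a, (hptw a).symm⟩

def Phi {p q r : ℕ} :
    Quot (fun ω ω' : {ω : MatT p q r // InT ω} =>
      ∃ w : Equiv.Perm (Fin r), ω'.1 = ω.1 * permMat w) →
    {S : Finset (CC p q) // GoodS S ∧ S.card = r} :=
  Quot.lift classSet (fun ω ω' h => classSet_resp ω ω' h)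

lemma Phi_bijective {p q r : ℕ} : Function.Bijective (Phi (p := p) (q := q) (r := r)) := by
  constructor
  · rintro ⟨ω⟩ ⟨ω'⟩ h
    have himg : Finset.image (toFunM ω.1 ω.2.col_ne) Finset.univ
        = Finset.image (toFunM ω'.1 ω'.2.col_ne) Finset.univ :=
      congrArg Subtype.val h
    obtain ⟨w, hw⟩ := images_perm (Good_toFunM ω.2 _).injective
      (Good_toFunM ω'.2 _).injective himg
    refine Quot.sound ⟨w, ?_⟩
    have e1 := ofFunM_toFunM ω.2 ω.2.col_ne
    have e2 := ofFunM_toFunM ω'.2 ω'.2.col_ne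
    funext row c
    rw [mul_permMat, ← e1, ← e2]
    have : toFunM ω'.1 ω'.2.col_ne c = toFunM ω.1 ω.2.col_ne (w c) := by
      rw [hw]; rfl
    rcases row with i | j
    · rw [ofFunM_inl, ofFunM_inl, this]
    · rw [ofFunM_inr, ofFunM_inr, this]
  · rintro ⟨S, hS, hcard⟩
    have e : Fin r ≃ {x // x ∈ S} := (Fintype.equivFinOfCardEq (by
      rw [Fintype.card_coe, hcard])).symm
    set f : Fin r → CC p q := fun c => (e c).1 with hf
    have hfinj : Function.Injective f := fun a b hab =>
      e.injective (Subtype.ext hab)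
    have hmem : ∀ c, f c ∈ S := fun c => (e c).2
    have hGood : Good f := by
      constructor
      · intro a b i h h'
        exact hfinj (hS.1 _ (hmem a) _ (hmem b) i h h')
      · intro a b j h h'
        exact hfinj (hS.2 _ (hmem a) _ (hmem b) j h h')
    have hIT : InT (ofFunM f) := InT_ofFunM hGood
    refine ⟨Quot.mk _ ⟨ofFunM f, hIT⟩, ?_⟩
    refine Subtype.ext ?_
    show Finset.image (toFunM (ofFunM f) hIT.col_ne) Finset.univ = S
    rw [toFunM_ofFunM hGood]
    apply Finset.eq_of_subset_of_card_le
    · intro c hc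
      obtain ⟨a, _, rfl⟩ := Finset.mem_image.mp hc
      exact hmem a
    · rw [card_image_good hGood, hcard]

lemma card_quot_eq {p q r : ℕ} :
    Nat.card (Quot (fun ω ω' : {ω : MatT p q r // InT ω} =>
      ∃ w : Equiv.Perm (Fin r), ω'.1 = ω.1 * permMat w)) =
    (Finset.univ.filter (fun S : Finset (CC p q) => GoodS S ∧ S.card = r)).card := by
  rw [Nat.card_eq_of_bijective _ Phi_bijective, Nat.card_eq_fintype_card,
    Fintype.card_subtype]

-- ### counting
def part1 {p q : ℕ} (S : Finset (CC p q)) : Finset (Fin p) :=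
  Finset.univ.filter (fun i => Sum.inl i ∈ S)

def part2 {p q : ℕ} (S : Finset (CC p q)) : Finset (Fin q) :=
  Finset.univ.filter (fun j => Sum.inr (Sum.inl j) ∈ S)

def part3 {p q : ℕ} (S : Finset (CC p q)) : Finset (Fin p × Fin q) :=
  Finset.univ.filter (fun x => Sum.inr (Sum.inr x) ∈ S)

@[simp] lemma mem_part1 {p q : ℕ} {S : Finset (CC p q)} {i : Fin p} :
    i ∈ part1 S ↔ Sum.inl i ∈ S := by simp [part1]

@[simp] lemma mem_part2 {p q : ℕ} {S : Finset (CC p q)} {j : Fin q} :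
    j ∈ part2 S ↔ Sum.inr (Sum.inl j) ∈ S := by simp [part2]

@[simp] lemma mem_part3 {p q : ℕ} {S : Finset (CC p q)} {x : Fin p × Fin q} :
    x ∈ part3 S ↔ Sum.inr (Sum.inr x) ∈ S := by simp [part3]

def recompose {p q : ℕ} (S₁ : Finset (Fin p)) (S₂ : Finset (Fin q))
    (S₃ : Finset (Fin p × Fin q)) : Finset (CC p q) :=
  S₁.image Sum.inl ∪ S₂.image (fun j => Sum.inr (Sum.inl j)) ∪
    S₃.image (fun x => Sum.inr (Sum.inr x))

@[simp] lemma mem_recompose {p q : ℕ} {S₁ : Finset (Fin p)} {S₂ : Finset (Fin q)}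
    {S₃ : Finset (Fin p × Fin q)} {c : CC p q} :
    c ∈ recompose S₁ S₂ S₃ ↔
      (∃ i ∈ S₁, Sum.inl i = c) ∨ (∃ j ∈ S₂, Sum.inr (Sum.inl j) = c) ∨
        (∃ x ∈ S₃, Sum.inr (Sum.inr x) = c) := by
  simp [recompose, or_assoc]

@[simp] lemma part1_recompose {p q : ℕ} (S₁ : Finset (Fin p)) (S₂ : Finset (Fin q))
    (S₃ : Finset (Fin p × Fin q)) : part1 (recompose S₁ S₂ S₃) = S₁ := by
  ext i; simp

@[simp] lemma part2_recompose {p q : ℕ} (S₁ : Finset (Fin p)) (S₂ : Finset (Fin q))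
    (S₃ : Finset (Fin p × Fin q)) : part2 (recompose S₁ S₂ S₃) = S₂ := by
  ext j; simp

@[simp] lemma part3_recompose {p q : ℕ} (S₁ : Finset (Fin p)) (S₂ : Finset (Fin q))
    (S₃ : Finset (Fin p × Fin q)) : part3 (recompose S₁ S₂ S₃) = S₃ := by
  ext x; simp

lemma recompose_parts {p q : ℕ} (S : Finset (CC p q)) :
    recompose (part1 S) (part2 S) (part3 S) = S := by
  ext c
  rcases c with i | j | x <;> simp

lemma card_recompose {p q : ℕ} (S₁ : Finset (Fin p)) (S₂ : Finset (Fin q))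
    (S₃ : Finset (Fin p × Fin q)) :
    (recompose S₁ S₂ S₃).card = S₁.card + S₂.card + S₃.card := by
  rw [recompose, Finset.card_union_of_disjoint, Finset.card_union_of_disjoint,
    Finset.card_image_of_injective _ Sum.inl_injective,
    Finset.card_image_of_injective _ (fun a b h => by simpa using h),
    Finset.card_image_of_injective _ (fun a b h => by simpa using h)]
  · rw [Finset.disjoint_left]
    rintro c hc hc'
    obtain ⟨a, _, rfl⟩ := Finset.mem_image.mp hc
    obtain ⟨b, _, hb⟩ := Finset.mem_image.mp hc'
    exact absurd hb (by simp)
  · rw [Finset.disjoint_left]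
    rintro c hc hc'
    obtain ⟨x, _, rfl⟩ := Finset.mem_image.mp hc'
    rcases Finset.mem_union.mp hc with h | h
    · obtain ⟨a, _, ha⟩ := Finset.mem_image.mp h
      exact absurd ha (by simp)
    · obtain ⟨b, _, hb⟩ := Finset.mem_image.mp h
      exact absurd hb (by simp)

lemma card_parts {p q : ℕ} (S : Finset (CC p q)) :
    S.card = (part1 S).card + (part2 S).card + (part3 S).card := by
  conv_lhs => rw [← recompose_parts S]
  rw [card_recompose]

-- GoodS structure lemmas
lemma GoodS.fst_injOn {p q : ℕ} {S : Finset (CC p q)} (hS : GoodS S) :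
    ∀ x ∈ part3 S, ∀ y ∈ part3 S, x.1 = y.1 → x = y := by
  intro x hx y hy hxy
  have := hS.1 _ (mem_part3.mp hx) _ (mem_part3.mp hy) x.1 rfl (by rw [hxy]; rfl)
  simpa using this

lemma GoodS.snd_injOn {p q : ℕ} {S : Finset (CC p q)} (hS : GoodS S) :
    ∀ x ∈ part3 S, ∀ y ∈ part3 S, x.2 = y.2 → x = y := by
  intro x hx y hy hxy
  have := hS.2 _ (mem_part3.mp hx) _ (mem_part3.mp hy) x.2 rfl (by rw [hxy]; rfl)
  simpa using this

lemma GoodS.disj1 {p q : ℕ} {S : Finset (CC p q)} (hS : GoodS S) :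
    ∀ i ∈ part1 S, i ∉ (part3 S).image Prod.fst := by
  intro i hi himg
  obtain ⟨x, hx, hx1⟩ := Finset.mem_image.mp himg
  have := hS.1 _ (mem_part1.mp hi) _ (mem_part3.mp hx) i rfl (by rw [← hx1]; rfl)
  simp at this

lemma GoodS.disj2 {p q : ℕ} {S : Finset (CC p q)} (hS : GoodS S) :
    ∀ j ∈ part2 S, j ∉ (part3 S).image Prod.snd := by
  intro j hj himg
  obtain ⟨x, hx, hx2⟩ := Finset.mem_image.mp himg
  have := hS.2 _ (mem_part2.mp hj) _ (mem_part3.mp hx) j rfl (by rw [← hx2]; rfl)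
  simp at this

lemma mem_recompose_top {p q : ℕ} {S₁ : Finset (Fin p)} {S₂ : Finset (Fin q)}
    {B : Finset (Fin p × Fin q)} {c : CC p q} {i : Fin p}
    (hc : c ∈ recompose S₁ S₂ B) (h : topRow c = some i) :
    (c = Sum.inl i ∧ i ∈ S₁) ∨ (∃ x ∈ B, c = Sum.inr (Sum.inr x) ∧ x.1 = i) := by
  rw [mem_recompose] at hc
  rcases hc with ⟨a, ha, rfl⟩ | ⟨b, hb, rfl⟩ | ⟨x, hx, rfl⟩
  · simp only [topRow, Option.some.injEq] at h; subst h; exact Or.inl ⟨rfl, ha⟩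
  · simp [topRow] at h
  · simp only [topRow, Option.some.injEq] at h; exact Or.inr ⟨x, hx, rfl, h⟩

lemma mem_recompose_bot {p q : ℕ} {S₁ : Finset (Fin p)} {S₂ : Finset (Fin q)}
    {B : Finset (Fin p × Fin q)} {c : CC p q} {j : Fin q}
    (hc : c ∈ recompose S₁ S₂ B) (h : botRow c = some j) :
    (c = Sum.inr (Sum.inl j) ∧ j ∈ S₂) ∨
      (∃ x ∈ B, c = Sum.inr (Sum.inr x) ∧ x.2 = j) := by
  rw [mem_recompose] at hc
  rcases hc with ⟨a, ha, rfl⟩ | ⟨b, hb, rfl⟩ | ⟨x, hx, rfl⟩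
  · simp [botRow] at h
  · simp only [botRow, Option.some.injEq] at h; subst h; exact Or.inl ⟨rfl, hb⟩
  · simp only [botRow, Option.some.injEq] at h; exact Or.inr ⟨x, hx, rfl, h⟩

lemma GoodS_recompose {p q : ℕ} {S₁ : Finset (Fin p)} {S₂ : Finset (Fin q)}
    {B : Finset (Fin p × Fin q)}
    (hB1 : ∀ x ∈ B, ∀ y ∈ B, x.1 = y.1 → x = y)
    (hB2 : ∀ x ∈ B, ∀ y ∈ B, x.2 = y.2 → x = y)
    (h1 : ∀ i ∈ S₁, i ∉ B.image Prod.fst)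
    (h2 : ∀ j ∈ S₂, j ∉ B.image Prod.snd) :
    GoodS (recompose S₁ S₂ B) := by
  constructor
  · intro c hc c' hc' i h h'
    rcases mem_recompose_top hc h with ⟨rfl, hi⟩ | ⟨x, hx, rfl, hx1⟩ <;>
      rcases mem_recompose_top hc' h' with ⟨rfl, hi'⟩ | ⟨x', hx', rfl, hx1'⟩
    · rfl
    · exact absurd (Finset.mem_image.mpr ⟨x', hx', hx1'⟩) (h1 i hi)
    · exact absurd (Finset.mem_image.mpr ⟨x, hx, hx1⟩) (h1 i hi')
    · rw [hB1 x hx x' hx' (by rw [hx1, hx1'])]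
  · intro c hc c' hc' j h h'
    rcases mem_recompose_bot hc h with ⟨rfl, hj⟩ | ⟨x, hx, rfl, hx2⟩ <;>
      rcases mem_recompose_bot hc' h' with ⟨rfl, hj'⟩ | ⟨x', hx', rfl, hx2'⟩
    · rfl
    · exact absurd (Finset.mem_image.mpr ⟨x', hx', hx2'⟩) (h2 j hj)
    · exact absurd (Finset.mem_image.mpr ⟨x, hx, hx2⟩) (h2 j hj')
    · rw [hB2 x hx x' hx' (by rw [hx2, hx2'])]

-- partial bijection graphs
def PB (p q k : ℕ) : Finset (Finset (Fin p × Fin q)) :=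
  Finset.univ.filter (fun B =>
    (∀ x ∈ B, ∀ y ∈ B, x.1 = y.1 → x = y) ∧
    (∀ x ∈ B, ∀ y ∈ B, x.2 = y.2 → x = y) ∧ B.card = k)

lemma card_PB_fiber {p q k : ℕ} (A : Finset (Fin p)) (hA : A.card = k) :
    ((PB p q k).filter (fun B => B.image Prod.fst = A)).card =
      Nat.descFactorial q k := by
  have : ((PB p q k).filter (fun B => B.image Prod.fst = A)).card =
      (Finset.univ : Finset ({x // x ∈ A} ↪ Fin q)).card := by
    refine (Finset.card_bij (fun (g : {x // x ∈ A} ↪ Fin q) _ =>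
      A.attach.image (fun x => (x.1, g x))) ?_ ?_ ?_).symm
    · intro g _
      rw [Finset.mem_filter]
      refine ⟨Finset.mem_filter.mpr ⟨Finset.mem_univ _, ?_, ?_, ?_⟩, ?_⟩
      · rintro x hx y hy hxy
        obtain ⟨a, _, rfl⟩ := Finset.mem_image.mp hx
        obtain ⟨b, _, rfl⟩ := Finset.mem_image.mp hy
        simp only at hxy
        rw [Subtype.ext hxy]
      · rintro x hx y hy hxy
        obtain ⟨a, _, rfl⟩ := Finset.mem_image.mp hx
        obtain ⟨b, _, rfl⟩ := Finset.mem_image.mp hy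
        simp only at hxy
        rw [g.injective hxy]
      · rw [Finset.card_image_of_injective _ (fun a b hab => by
          exact Subtype.ext (congrArg Prod.fst hab)), Finset.card_attach, hA]
      · rw [Finset.image_image]
        have : (Prod.fst ∘ fun x : {x // x ∈ A} => (x.1, g x)) = Subtype.val := rfl
        rw [this, Finset.attach_image_val]
    · intro g _ g' _ h
      ext x
      have h' : A.attach.image (fun y => (y.1, g y)) = A.attach.image (fun y => (y.1, g' y)) := h
      have hx : (x.1, g x) ∈ A.attach.image (fun y => (y.1, g' y)) := by
        rw [← h']
        exact Finset.mem_image.mpr ⟨x, Finset.mem_attach _ _, rfl⟩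
      obtain ⟨y, _, hy⟩ := Finset.mem_image.mp hx
      obtain ⟨h1, h2⟩ := Prod.mk.injEq .. ▸ hy
      rw [← h2]
      have hyx : y = x := Subtype.ext h1
      rw [hyx]
    · intro B hB
      rw [Finset.mem_filter] at hB
      obtain ⟨hBPB, hIm⟩ := hB
      rw [PB, Finset.mem_filter] at hBPB
      obtain ⟨-, hB1, hB2, hBk⟩ := hBPB
      have wit : ∀ x : {x // x ∈ A}, ∃ jb, (x.1, jb) ∈ B := by
        intro x
        have : x.1 ∈ B.image Prod.fst := by rw [hIm]; exact x.2
        obtain ⟨b, hbB, hb1⟩ := Finset.mem_image.mp this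
        exact ⟨b.2, by rwa [← hb1, Prod.mk.eta]⟩
      set g : {x // x ∈ A} → Fin q := fun x => (wit x).choose with hg
      have hgB : ∀ x, (x.1, g x) ∈ B := fun x => (wit x).choose_spec
      have ginj : Function.Injective g := by
        intro x y hxy
        have := hB2 _ (hgB x) _ (hgB y) hxy
        exact Subtype.ext (congrArg Prod.fst this)
      refine ⟨⟨g, ginj⟩, Finset.mem_univ _, ?_⟩
      apply Finset.eq_of_subset_of_card_le
      · intro c hc
        obtain ⟨x, _, rfl⟩ := Finset.mem_image.mp hc
        exact hgB x
      · rw [Finset.card_image_of_injective _ (fun a b hab => by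
          exact Subtype.ext (congrArg Prod.fst hab)), Finset.card_attach, hA, hBk]
  rw [this, Finset.card_univ, Fintype.card_embedding_eq, Fintype.card_fin,
    Fintype.card_coe, hA]

lemma card_PB {p q k : ℕ} :
    (PB p q k).card = p.choose k * Nat.descFactorial q k := by
  rw [Finset.card_eq_sum_card_fiberwise (f := fun B => B.image Prod.fst)
    (t := Finset.univ.powersetCard k) (fun B hB => by
      rw [Finset.mem_coe, PB, Finset.mem_filter] at hB
      rw [Finset.mem_coe, Finset.mem_powersetCard]
      exact ⟨Finset.subset_univ _,
        by rw [Finset.card_image_of_injOn (fun x hx y hy => hB.2.1 x hx y hy), hB.2.2.2]⟩)]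
  rw [Finset.sum_congr rfl (fun A hA => card_PB_fiber A
    (Finset.mem_powersetCard.mp hA).2)]
  rw [Finset.sum_const, Finset.card_powersetCard, Finset.card_univ, Fintype.card_fin,
    smul_eq_mul]

def SS (p q r : ℕ) : Finset (Finset (CC p q)) :=
  Finset.univ.filter (fun S => GoodS S ∧ S.card = r)

def kappa {p q : ℕ} (S : Finset (CC p q)) : ℕ × ℕ × ℕ :=
  ((part3 S).card, (part1 S).card, (part2 S).card)

lemma card_fiber_B {p q r : ℕ} (k s t : ℕ) (hkst : k + s + t = r)
    (B : Finset (Fin p × Fin q)) (hB : B ∈ PB p q k) :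
    (((SS p q r).filter (fun S => kappa S = (k, s, t))).filter
      (fun S => part3 S = B)).card = (p - k).choose s * (q - k).choose t := by
  rw [PB, Finset.mem_filter] at hB
  obtain ⟨-, hB1, hB2, hBk⟩ := hB
  have hfst : (B.image Prod.fst).card = k := by
    rw [Finset.card_image_of_injOn (fun x hx y hy => hB1 x hx y hy), hBk]
  have hsnd : (B.image Prod.snd).card = k := by
    rw [Finset.card_image_of_injOn (fun x hx y hy => hB2 x hx y hy), hBk]
  have key := Finset.card_bij
    (s := (Finset.univ \ B.image Prod.fst).powersetCard s ×ˢ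
      (Finset.univ \ B.image Prod.snd).powersetCard t)
    (t := ((SS p q r).filter (fun S => kappa S = (k, s, t))).filter
      (fun S => part3 S = B))
    (fun P _ => recompose P.1 P.2 B)
    (by
      rintro ⟨P₁, P₂⟩ hP
      rw [Finset.mem_product, Finset.mem_powersetCard, Finset.mem_powersetCard] at hP
      obtain ⟨⟨hP1s, hP1c⟩, hP2s, hP2c⟩ := hP
      have h1 : ∀ i ∈ P₁, i ∉ B.image Prod.fst := fun i hi =>
        (Finset.mem_sdiff.mp (hP1s hi)).2
      have h2 : ∀ j ∈ P₂, j ∉ B.image Prod.snd := fun j hj =>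
        (Finset.mem_sdiff.mp (hP2s hj)).2
      rw [Finset.mem_filter, Finset.mem_filter]
      refine ⟨⟨Finset.mem_filter.mpr ⟨Finset.mem_univ _,
        GoodS_recompose hB1 hB2 h1 h2, ?_⟩, ?_⟩, part3_recompose _ _ _⟩
      · rw [card_recompose, hP1c, hP2c, hBk]; omega
      · rw [kappa, part1_recompose, part2_recompose, part3_recompose, hP1c, hP2c, hBk])
    (by
      intro a ha b hb h
      have h' : recompose a.1 a.2 B = recompose b.1 b.2 B := h
      have e1 : a.1 = b.1 := by
        rw [← part1_recompose a.1 a.2 B, h', part1_recompose]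
      have e2 : a.2 = b.2 := by
        rw [← part2_recompose a.1 a.2 B, h', part2_recompose]
      exact Prod.ext e1 e2)
    (by
      intro S hS
      rw [Finset.mem_filter, Finset.mem_filter, SS, Finset.mem_filter] at hS
      obtain ⟨⟨⟨-, hGood, hcard⟩, hκ⟩, hpart3⟩ := hS
      rw [kappa, Prod.mk.injEq, Prod.mk.injEq] at hκ
      obtain ⟨e3, e1, e2⟩ := hκ
      refine ⟨(part1 S, part2 S), ?_, ?_⟩
      · rw [Finset.mem_product, Finset.mem_powersetCard, Finset.mem_powersetCard]
        refine ⟨⟨fun i hi => Finset.mem_sdiff.mpr ⟨Finset.mem_univ _, ?_⟩, e1⟩,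
          fun j hj => Finset.mem_sdiff.mpr ⟨Finset.mem_univ _, ?_⟩, e2⟩
        · rw [← hpart3]; exact hGood.disj1 i hi
        · rw [← hpart3]; exact hGood.disj2 j hj
      · show recompose (part1 S) (part2 S) B = S
        rw [← hpart3]; exact recompose_parts S)
  rw [← key, Finset.card_product, Finset.card_powersetCard, Finset.card_powersetCard,
    Finset.card_sdiff_of_subset (Finset.subset_univ _), Finset.card_sdiff_of_subset (Finset.subset_univ _),
    Finset.card_univ, Finset.card_univ, Fintype.card_fin, Fintype.card_fin, hfst, hsnd]

lemma card_F {p q r : ℕ} (k s t : ℕ) (hkst : k + s + t = r) :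
    ((SS p q r).filter (fun S => kappa S = (k, s, t))).card =
      (p.choose k * Nat.descFactorial q k) * ((p - k).choose s * (q - k).choose t) := by
  rw [Finset.card_eq_sum_card_fiberwise (f := part3) (t := PB p q k) (fun S hS => by
    rw [Finset.mem_coe, Finset.mem_filter, SS, Finset.mem_filter] at hS
    obtain ⟨⟨-, hGood, -⟩, hκ⟩ := hS
    rw [kappa, Prod.mk.injEq, Prod.mk.injEq] at hκ
    rw [Finset.mem_coe, PB, Finset.mem_filter]
    exact ⟨Finset.mem_univ _, hGood.fst_injOn, hGood.snd_injOn, hκ.1⟩)]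
  rw [Finset.sum_congr rfl (fun B hB => card_fiber_B k s t hkst B hB),
    Finset.sum_const, smul_eq_mul, card_PB]

lemma arith_div {p k s : ℕ} (h : k + s ≤ p) :
    p.factorial / (k.factorial * s.factorial * (p - k - s).factorial) =
      p.choose k * (p - k).choose s := by
  have h1 : k ≤ p := le_trans (Nat.le_add_right _ _) h
  have h2 : s ≤ p - k := by omega
  have e1 := Nat.choose_mul_factorial_mul_factorial h1
  have e2 := Nat.choose_mul_factorial_mul_factorial h2
  refine Nat.div_eq_of_eq_mul_left (by positivity) ?_
  have hss : p - k - s = p - k - s := rfl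
  calc p.factorial = p.choose k * k.factorial * (p - k).factorial := e1.symm
    _ = p.choose k * k.factorial *
        ((p - k).choose s * s.factorial * (p - k - s).factorial) := by rw [e2]
    _ = p.choose k * (p - k).choose s *
        (k.factorial * s.factorial * (p - k - s).factorial) := by ring

/-- the number of classes of `𝕋` modulo column permutations equals
`∑_{k+s+t=r, k+s≤p, k+t≤q} (p choose k,s,p-k-s)(q choose k,t,q-k-t) k!`. -/
theorem card_T_mod_column_permutations (p q r : ℕ) (hr : r ≤ p + q) :
    Nat.card (Quot fun ω ω' : {ω : MatT p q r // InT ω} =>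
        ∃ w : Equiv.Perm (Fin r), ω'.1 = ω.1 * permMat w) =
      ∑ x ∈ (Finset.range (r + 1) ×ˢ Finset.range (r + 1) ×ˢ
          Finset.range (r + 1)).filter
          (fun x => x.1 + x.2.1 + x.2.2 = r ∧ x.1 + x.2.1 ≤ p ∧ x.1 + x.2.2 ≤ q),
        (Nat.factorial p /
            (Nat.factorial x.1 * Nat.factorial x.2.1 *
              Nat.factorial (p - x.1 - x.2.1))) *
          (Nat.factorial q /
            (Nat.factorial x.1 * Nat.factorial x.2.2 *
              Nat.factorial (q - x.1 - x.2.2))) *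
          Nat.factorial x.1 := by
  rw [card_quot_eq]
  show (SS p q r).card = _
  have hmem : ∀ S ∈ SS p q r, kappa S ∈
      (Finset.range (r + 1) ×ˢ Finset.range (r + 1) ×ˢ Finset.range (r + 1)).filter
        (fun x => x.1 + x.2.1 + x.2.2 = r ∧ x.1 + x.2.1 ≤ p ∧ x.1 + x.2.2 ≤ q) := by
    intro S hS
    rw [SS, Finset.mem_filter] at hS
    obtain ⟨-, hGood, hcard⟩ := hS
    have hsum : S.card = (part1 S).card + (part2 S).card + (part3 S).card :=
      card_parts S
    have hdp : Disjoint ((part3 S).image Prod.fst) (part1 S) :=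
      Finset.disjoint_right.mpr (fun i hi => hGood.disj1 i hi)
    have hdq : Disjoint ((part3 S).image Prod.snd) (part2 S) :=
      Finset.disjoint_right.mpr (fun j hj => hGood.disj2 j hj)
    have hup := Finset.card_le_univ (((part3 S).image Prod.fst) ∪ part1 S)
    have huq := Finset.card_le_univ (((part3 S).image Prod.snd) ∪ part2 S)
    rw [Finset.card_union_of_disjoint hdp,
      Finset.card_image_of_injOn (fun x hx y hy => hGood.fst_injOn x hx y hy),
      Fintype.card_fin] at hup
    rw [Finset.card_union_of_disjoint hdq,
      Finset.card_image_of_injOn (fun x hx y hy => hGood.snd_injOn x hx y hy),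
      Fintype.card_fin] at huq
    simp only [Finset.mem_filter, Finset.mem_product, Finset.mem_range, kappa]
    omega
  rw [Finset.card_eq_sum_card_fiberwise hmem]
  refine Finset.sum_congr rfl ?_
  rintro ⟨k, s, t⟩ hx
  rw [Finset.mem_filter] at hx
  obtain ⟨-, hkst, hkp, hkq⟩ := hx
  rw [card_F k s t hkst, arith_div hkp, arith_div hkq,
    Nat.descFactorial_eq_factorial_mul_choose]
  ring
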